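/- Suppose sprank(A^S) = n, A ∈ A^S satisfies the matching property (rank(A_T) = sprank(A^S_T) for every T ⊆ {1,…,m}), and C ∈ A^S is any matrix with the same sparsity pattern. Then cospark(C) ≤ cospark(A). -/
import Mathlib


open Matrix MeasureTheory

/-- `A` has sparsity pattern `S`: the nonzero entries of `A` are exactly those indexed by `S`. -/
def HasPattern {m n : ℕ} (S : Finset (Fin m × Fin n)) (A : Matrix (Fin m) (Fin n) ℝ) : Prop :=
  ∀ i j, A i j ≠ 0 ↔ (i, j) ∈ S

/-- Generic rank of the class of matrices with sparsity pattern `S`. -/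
noncomputable def sprank {m n : ℕ} (S : Finset (Fin m × Fin n)) : ℕ :=
  sSup {r : ℕ | ∃ A : Matrix (Fin m) (Fin n) ℝ, HasPattern S A ∧ A.rank = r}

/-- The sparsity pattern restricted to the rows in `T` (rows outside `T` become zero). -/
def patternOn {m n : ℕ} (S : Finset (Fin m × Fin n)) (T : Finset (Fin m)) :
    Finset (Fin m × Fin n) :=
  S.filter (fun p => p.1 ∈ T)

/-- A matching of a sparsity pattern: any two distinct pairs differ in both coordinates. -/
def IsMatching {m n : ℕ} (M : Finset (Fin m × Fin n)) : Prop :=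
  ∀ p ∈ M, ∀ q ∈ M, p ≠ q → p.1 ≠ q.1 ∧ p.2 ≠ q.2

/-- `nu S` : maximum cardinality of a matching contained in `S`. -/
noncomputable def nu {m n : ℕ} (S : Finset (Fin m × Fin n)) : ℕ :=
  sSup {k : ℕ | ∃ M ⊆ S, IsMatching M ∧ M.card = k}

/-- ℓ₀ "norm": number of nonzero entries of a vector. -/
noncomputable def l0 {m : ℕ} (y : Fin m → ℝ) : ℕ :=
  (Finset.univ.filter (fun i => y i ≠ 0)).card

/-- `cospark A` : minimum of `‖A x‖₀` over nonzero `x`. -/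
noncomputable def cospark {m n : ℕ} (A : Matrix (Fin m) (Fin n) ℝ) : ℕ :=
  sInf {k : ℕ | ∃ x : Fin n → ℝ, x ≠ 0 ∧ l0 (A.mulVec x) = k}

/-- Generic cospark of the class of matrices with sparsity pattern `S`. -/
noncomputable def spcospark {m n : ℕ} (S : Finset (Fin m × Fin n)) : ℕ :=
  sSup {k : ℕ | ∃ A : Matrix (Fin m) (Fin n) ℝ, HasPattern S A ∧ cospark A = k}

/-- The row-submatrix `A_T`, realized as `A` with the rows outside `T` zeroed out. -/
noncomputable def rowRestrict {m n : ℕ} (A : Matrix (Fin m) (Fin n) ℝ) (T : Finset (Fin m)) :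
    Matrix (Fin m) (Fin n) ℝ :=
  Matrix.of fun i j => if i ∈ T then A i j else 0

/-- `X_W` : the rows of the pattern `S` all of whose nonzero positions lie in the columns `W`. -/
def rowsIn {m n : ℕ} (S : Finset (Fin m × Fin n)) (W : Finset (Fin n)) : Finset (Fin m) :=
  Finset.univ.filter (fun i => ∀ j, (i, j) ∈ S → j ∈ W)

lemma ker_of_rank_lt {m n : ℕ} (M : Matrix (Fin m) (Fin n) ℝ) (h : M.rank < n) :
    ∃ x : Fin n → ℝ, x ≠ 0 ∧ M.mulVec x = 0 := by
  have hrn := LinearMap.finrank_range_add_finrank_ker M.mulVecLin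
  rw [Module.finrank_fintype_fun_eq_card, Fintype.card_fin] at hrn
  have hker : Module.finrank ℝ (LinearMap.ker M.mulVecLin) ≠ 0 := by
    intro h0
    rw [h0, add_zero] at hrn
    exact absurd hrn (Nat.ne_of_lt h)
  have : LinearMap.ker M.mulVecLin ≠ ⊥ := by
    intro hb; rw [hb] at hker; simp at hker
  obtain ⟨x, hx, hx0⟩ := Submodule.exists_mem_ne_zero_of_ne_bot this
  exact ⟨x, hx0, hx⟩

lemma rank_lt_of_ker {m n : ℕ} (M : Matrix (Fin m) (Fin n) ℝ)
    (x : Fin n → ℝ) (hx : x ≠ 0) (hMx : M.mulVec x = 0) : M.rank < n := by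
  have hrn := LinearMap.finrank_range_add_finrank_ker M.mulVecLin
  rw [Module.finrank_fintype_fun_eq_card, Fintype.card_fin] at hrn
  have : LinearMap.ker M.mulVecLin ≠ ⊥ := by
    intro hb
    have : x ∈ LinearMap.ker M.mulVecLin := by simpa using hMx
    rw [hb] at this; exact hx (by simpa using this)
  have hk : Module.finrank ℝ (LinearMap.ker M.mulVecLin) ≠ 0 := by
    intro h0
    exact this (Submodule.finrank_eq_zero.mp h0)
  have hr : M.rank = Module.finrank ℝ (LinearMap.range M.mulVecLin) := rfl
  omega

/-- if `sprank S = n`, `A ∈ A^S` satisfies the matching property, and `C ∈ A^S`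
is any matrix with the same sparsity pattern, then `cospark C ≤ cospark A`. -/
theorem stmt3 {m n : ℕ} (hn : 1 ≤ n) (hmn : n < m) (S : Finset (Fin m × Fin n))
    (hspr : sprank S = n) (A : Matrix (Fin m) (Fin n) ℝ) (hA : HasPattern S A)
    (hmatch : ∀ T : Finset (Fin m), (rowRestrict A T).rank = sprank (patternOn S T))
    (C : Matrix (Fin m) (Fin n) ℝ) (hC : HasPattern S C) :
    cospark C ≤ cospark A := by
  -- cospark A is attained
  have hne : {k : ℕ | ∃ x : Fin n → ℝ, x ≠ 0 ∧ l0 (A.mulVec x) = k}.Nonempty := by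
    refine ⟨l0 (A.mulVec (fun _ => 1)), fun _ => 1, ?_, rfl⟩
    intro h
    have := congrFun h ⟨0, hn⟩
    simp at this
  obtain ⟨x, hx0, hxl⟩ := Nat.sInf_mem hne
  set T : Finset (Fin m) := Finset.univ.filter (fun i => A.mulVec x i = 0) with hT
  -- rowRestrict A T annihilates x
  have hATx : (rowRestrict A T).mulVec x = 0 := by
    funext i
    simp only [rowRestrict, Matrix.mulVec, dotProduct, Matrix.of_apply]
    by_cases hi : i ∈ T
    · simp only [hi, if_true]
      have : A.mulVec x i = 0 := by
        rw [hT] at hi; simpa using hi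
      simpa [Matrix.mulVec, dotProduct] using this
    · simp [hi]
  have hrankA : (rowRestrict A T).rank < n := rank_lt_of_ker _ x hx0 hATx
  -- rowRestrict C T has pattern patternOn S T
  have hpatC : HasPattern (patternOn S T) (rowRestrict C T) := by
    intro i j
    simp only [rowRestrict, Matrix.of_apply, patternOn, Finset.mem_filter]
    by_cases hi : i ∈ T
    · simp [hi, hC i j]
    · simp [hi]
  -- hence its rank ≤ sprank (patternOn S T)
  have hbdd : BddAbove {r : ℕ | ∃ B : Matrix (Fin m) (Fin n) ℝ,
      HasPattern (patternOn S T) B ∧ B.rank = r} := by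
    refine ⟨n, fun r hr => ?_⟩
    obtain ⟨B, _, hB⟩ := hr
    rw [← hB]
    simpa using B.rank_le_width
  have hrankC : (rowRestrict C T).rank < n := by
    have h1 : (rowRestrict C T).rank ≤ sprank (patternOn S T) :=
      le_csSup hbdd ⟨rowRestrict C T, hpatC, rfl⟩
    calc (rowRestrict C T).rank ≤ sprank (patternOn S T) := h1
      _ = (rowRestrict A T).rank := (hmatch T).symm
      _ < n := hrankA
  obtain ⟨x', hx'0, hCx'⟩ := ker_of_rank_lt _ hrankC
  -- C x' vanishes on T
  have hsupp : ∀ i, C.mulVec x' i ≠ 0 → A.mulVec x i ≠ 0 := by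
    intro i hCi hAi
    have hi : i ∈ T := by rw [hT]; simpa using hAi
    have := congrFun hCx' i
    simp only [rowRestrict, Matrix.mulVec, dotProduct, Matrix.of_apply,
      hi, if_true, Pi.zero_apply] at this
    exact hCi (by simpa [Matrix.mulVec, dotProduct] using this)
  have hle : l0 (C.mulVec x') ≤ l0 (A.mulVec x) := by
    apply Finset.card_le_card
    intro i hi
    simp only [Finset.mem_filter, Finset.mem_univ, true_and] at hi ⊢
    exact hsupp i hi
  calc cospark C ≤ l0 (C.mulVec x') := Nat.sInf_le ⟨x', hx'0, rfl⟩
    _ ≤ l0 (A.mulVec x) := hle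
    _ = cospark A := hxl
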